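/- Let q₀, q₁ be probability densities on (S, ν) with h²(q₀,q₁) = 1 − cos α, α ∈ (0, π/2), λ ∈ (0, 1/4), and q₂ = ((sin((1−λ)α)/sin α)·√q₁ + (sin(λα)/sin α)·√q₀)². Then h²(q₁,q₂) = 1 − cos(λα) and h²(q₀,q₂) = 1 − cos((1−λ)α). -/

import Mathlib

open MeasureTheory Real

lemma hellinger_key_trig (α β : ℝ) (hs : Real.sin α ≠ 0) :
    (1 / 2) * ((1 - Real.sin (α - β) / Real.sin α) ^ 2 + (Real.sin β / Real.sin α) ^ 2
      - 2 * (1 - Real.sin (α - β) / Real.sin α) * (Real.sin β / Real.sin α) * Real.cos α)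
      = 1 - Real.cos β := by
  rw [Real.sin_sub]
  field_simp
  linear_combination (-(Real.sin β ^ 2)) * Real.sin_sq_add_cos_sq α
    + (Real.sin α ^ 2) * Real.sin_sq_add_cos_sq β

/-- Hellinger distances of the least favorable density:
`h²(q₁,q₂) = 1 - cos(λα)` and `h²(q₀,q₂) = 1 - cos((1-λ)α)`. -/
theorem hellinger_least_favorable_density
    {S : Type*} [MeasurableSpace S] (ν : Measure S)
    (q0 q1 : S → ℝ)
    (h0 : ∀ s, 0 ≤ q0 s) (h1 : ∀ s, 0 ≤ q1 s)
    (hi0 : Integrable q0 ν) (hi1 : Integrable q1 ν)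
    (hm0 : ∫ s, q0 s ∂ν = 1) (hm1 : ∫ s, q1 s ∂ν = 1)
    (α l : ℝ) (hα : α ∈ Set.Ioo 0 (π / 2)) (hl : l ∈ Set.Ioo 0 (1 / 4 : ℝ))
    (hHell : (1 / 2) * ∫ s, (Real.sqrt (q0 s) - Real.sqrt (q1 s)) ^ 2 ∂ν = 1 - Real.cos α)
    (q2 : S → ℝ)
    (hq2 : q2 = fun s =>
      (Real.sin ((1 - l) * α) / Real.sin α * Real.sqrt (q1 s)
        + Real.sin (l * α) / Real.sin α * Real.sqrt (q0 s)) ^ 2) :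
    (1 / 2) * (∫ s, (Real.sqrt (q1 s) - Real.sqrt (q2 s)) ^ 2 ∂ν) = 1 - Real.cos (l * α) ∧
    (1 / 2) * (∫ s, (Real.sqrt (q0 s) - Real.sqrt (q2 s)) ^ 2 ∂ν) = 1 - Real.cos ((1 - l) * α) := by
  obtain ⟨hα0, hα1⟩ := hα
  obtain ⟨hl0, hl1⟩ := hl
  have hsα : 0 < Real.sin α := Real.sin_pos_of_pos_of_lt_pi hα0 (by linarith [Real.pi_pos])
  set a : ℝ := Real.sin ((1 - l) * α) / Real.sin α with ha_def
  set b : ℝ := Real.sin (l * α) / Real.sin α with hb_def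
  have ha : 0 ≤ a := div_nonneg (Real.sin_nonneg_of_nonneg_of_le_pi
    (by nlinarith) (by nlinarith [Real.pi_pos])) hsα.le
  have hb : 0 ≤ b := div_nonneg (Real.sin_nonneg_of_nonneg_of_le_pi
    (by nlinarith) (by nlinarith [Real.pi_pos])) hsα.le
  -- measurability
  have hms0 : AEStronglyMeasurable (fun s => Real.sqrt (q0 s)) ν :=
    Real.continuous_sqrt.comp_aestronglyMeasurable hi0.aestronglyMeasurable
  have hms1 : AEStronglyMeasurable (fun s => Real.sqrt (q1 s)) ν :=
    Real.continuous_sqrt.comp_aestronglyMeasurable hi1.aestronglyMeasurable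
  -- integrability of the cross term
  have hip : Integrable (fun s => Real.sqrt (q0 s) * Real.sqrt (q1 s)) ν := by
    refine Integrable.mono' (hi0.add hi1) (hms0.mul hms1) ?_
    filter_upwards with s
    have hs0 := Real.sqrt_nonneg (q0 s)
    have hs1 := Real.sqrt_nonneg (q1 s)
    have e0 := Real.sq_sqrt (h0 s)
    have e1 := Real.sq_sqrt (h1 s)
    rw [Real.norm_eq_abs, abs_of_nonneg (mul_nonneg hs0 hs1), Pi.add_apply]
    nlinarith [sq_nonneg (Real.sqrt (q0 s) - Real.sqrt (q1 s))]
  -- the Hellinger affinity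
  have hcos : ∫ s, Real.sqrt (q0 s) * Real.sqrt (q1 s) ∂ν = Real.cos α := by
    have hpt : (fun s => (Real.sqrt (q0 s) - Real.sqrt (q1 s)) ^ 2)
        = fun s => q0 s + q1 s - 2 * (Real.sqrt (q0 s) * Real.sqrt (q1 s)) := by
      funext s
      have e0 := Real.sq_sqrt (h0 s)
      have e1 := Real.sq_sqrt (h1 s)
      linear_combination e0 + e1
    have hiadd : Integrable (fun s => q0 s + q1 s) ν := hi0.add hi1
    rw [hpt, integral_sub hiadd (hip.const_mul 2), integral_add hi0 hi1,
      integral_const_mul, hm0, hm1] at hHell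
    linarith
  -- square root of q2
  have hsq2 : ∀ s, Real.sqrt (q2 s) = a * Real.sqrt (q1 s) + b * Real.sqrt (q0 s) := by
    intro s
    rw [hq2]
    exact Real.sqrt_sq (by positivity)
  have key := hellinger_key_trig α
  constructor
  · have hpt : (fun s => (Real.sqrt (q1 s) - Real.sqrt (q2 s)) ^ 2)
        = fun s => (1 - a) ^ 2 * q1 s + b ^ 2 * q0 s
            - (2 * (1 - a) * b) * (Real.sqrt (q0 s) * Real.sqrt (q1 s)) := by
      funext s
      rw [hsq2 s]
      have e0 := Real.sq_sqrt (h0 s)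
      have e1 := Real.sq_sqrt (h1 s)
      linear_combination (1 - a) ^ 2 * e1 + b ^ 2 * e0
    have hiadd : Integrable (fun s => (1 - a) ^ 2 * q1 s + b ^ 2 * q0 s) ν :=
      (hi1.const_mul _).add (hi0.const_mul _)
    rw [hpt, integral_sub hiadd (hip.const_mul _),
      integral_add (hi1.const_mul _) (hi0.const_mul _),
      integral_const_mul, integral_const_mul, integral_const_mul, hm0, hm1, hcos]
    have h2 := key (l * α) hsα.ne'
    have harg : α - l * α = (1 - l) * α := by ring
    rw [harg] at h2
    rw [← h2]; ring
  · have hpt : (fun s => (Real.sqrt (q0 s) - Real.sqrt (q2 s)) ^ 2)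
        = fun s => (1 - b) ^ 2 * q0 s + a ^ 2 * q1 s
            - (2 * (1 - b) * a) * (Real.sqrt (q0 s) * Real.sqrt (q1 s)) := by
      funext s
      rw [hsq2 s]
      have e0 := Real.sq_sqrt (h0 s)
      have e1 := Real.sq_sqrt (h1 s)
      linear_combination (1 - b) ^ 2 * e0 + a ^ 2 * e1
    have hiadd : Integrable (fun s => (1 - b) ^ 2 * q0 s + a ^ 2 * q1 s) ν :=
      (hi0.const_mul _).add (hi1.const_mul _)
    rw [hpt, integral_sub hiadd (hip.const_mul _),
      integral_add (hi0.const_mul _) (hi1.const_mul _),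
      integral_const_mul, integral_const_mul, integral_const_mul, hm0, hm1, hcos]
    have h2 := key ((1 - l) * α) hsα.ne'
    have harg : α - (1 - l) * α = l * α := by ring
    rw [harg] at h2
    rw [← h2]; ring
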